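/- Let X ~ N(m, σ²) with σ > 0 and α = m/σ. Then Var(max(X, 0)) = (m² + σ²)Φ(α) + mσ·φ(α) − (mΦ(α) + σφ(α))². -/

import Mathlib

open MeasureTheory ProbabilityTheory Real Set Filter Topology

noncomputable def stdNormalPhi : ℝ → ℝ := fun x => cdf (gaussianReal 0 1) x

noncomputable def stdNormalPdf : ℝ → ℝ :=
  fun x => (Real.sqrt (2 * Real.pi))⁻¹ * Real.exp (-x ^ 2 / 2)

lemma pdf01 : gaussianPDFReal 0 1 = stdNormalPdf := by
  funext x
  simp [gaussianPDFReal, stdNormalPdf]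

lemma pdf_eq (m σ : ℝ) (hσ : 0 < σ) (x : ℝ) :
    gaussianPDFReal m (⟨σ ^ 2, sq_nonneg σ⟩ : NNReal) x = stdNormalPdf ((x - m) / σ) * σ⁻¹ := by
  have h2π : (0:ℝ) < 2 * π := by positivity
  simp only [gaussianPDFReal, stdNormalPdf, NNReal.coe_mk]
  change (√(2 * π * σ ^ 2))⁻¹ * rexp (-(x - m) ^ 2 / (2 * σ ^ 2)) = _
  rw [show 2 * π * σ ^ 2 = (2 * π) * σ ^ 2 by ring, Real.sqrt_mul h2π.le,
    Real.sqrt_sq hσ.le]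
  rw [mul_inv]
  have : ((x - m) / σ) ^ 2 = (x-m)^2 / σ^2 := by rw [div_pow]
  rw [this]
  ring_nf

lemma pdf_nonneg (x : ℝ) : 0 ≤ stdNormalPdf x := by
  unfold stdNormalPdf; positivity

lemma pdf_cont : Continuous stdNormalPdf := by
  unfold stdNormalPdf
  fun_prop

lemma pdf_integrable : Integrable stdNormalPdf := by
  rw [← pdf01]; exact integrable_gaussianPDFReal 0 1

lemma pdf_total : ∫ x, stdNormalPdf x = 1 := by
  rw [← pdf01]; exact integral_gaussianPDFReal_eq_one 0 one_ne_zero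

lemma Phi_eq (a : ℝ) : stdNormalPhi a = ∫ t in Iic a, stdNormalPdf t := by
  rw [stdNormalPhi, cdf_eq_real, measureReal_def, gaussianReal_apply_eq_integral 0 one_ne_zero,
    ENNReal.toReal_ofReal (integral_nonneg fun x => gaussianPDFReal_nonneg 0 1 x), pdf01]

lemma hasDerivAt_Phi (a : ℝ) : HasDerivAt stdNormalPhi (stdNormalPdf a) a := by
  have heq : ∀ b : ℝ, stdNormalPhi b
      = (∫ t in Iic (0:ℝ), stdNormalPdf t) + ∫ t in (0:ℝ)..b, stdNormalPdf t := by
    intro b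
    rw [Phi_eq, ← intervalIntegral.integral_Iic_sub_Iic pdf_integrable.integrableOn pdf_integrable.integrableOn]
    ring
  have : HasDerivAt (fun b => (∫ t in Iic (0:ℝ), stdNormalPdf t)
      + ∫ t in (0:ℝ)..b, stdNormalPdf t) (stdNormalPdf a) a := by
    refine (HasDerivAt.const_add _ ?_)
    exact intervalIntegral.integral_hasDerivAt_right pdf_integrable.intervalIntegrable
      (pdf_cont.stronglyMeasurableAtFilter _ _) pdf_cont.continuousAt
  exact this.congr_of_eventuallyEq (Filter.Eventually.of_forall heq)

lemma Phi_tendsto : Tendsto stdNormalPhi atTop (𝓝 1) := tendsto_cdf_atTop _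

lemma pdf_even (a : ℝ) : stdNormalPdf (-a) = stdNormalPdf a := by
  simp [stdNormalPdf]

lemma Phi_neg (a : ℝ) : stdNormalPhi (-a) = 1 - stdNormalPhi a := by
  rw [Phi_eq, Phi_eq, ← integral_comp_neg_Ioi]
  simp_rw [pdf_even]
  have := intervalIntegral.integral_Iic_add_Ioi (b := a) pdf_integrable.integrableOn pdf_integrable.integrableOn
  rw [pdf_total] at this
  linarith

lemma hasDerivAt_pdf (a : ℝ) : HasDerivAt stdNormalPdf (-a * stdNormalPdf a) a := by
  unfold stdNormalPdf
  have h : HasDerivAt (fun x : ℝ => -x ^ 2 / 2) (-a) a := by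
    have := ((hasDerivAt_pow 2 a).neg).div_const 2
    refine this.congr_deriv ?_
    norm_num; ring
  have := (h.exp).const_mul (Real.sqrt (2 * Real.pi))⁻¹
  refine this.congr_deriv ?_
  ring

lemma pdf_comp (m σ : ℝ) (hσ : 0 < σ) (x : ℝ) :
    stdNormalPdf ((x - m) / σ)
      = (Real.sqrt (2 * Real.pi))⁻¹ * Real.exp (-(2 * σ ^ 2)⁻¹ * (x - m) ^ 2) := by
  unfold stdNormalPdf
  congr 1
  rw [div_pow]
  ring

lemma int_sq_aux {b : ℝ} (hb : 0 < b) : Integrable (fun y : ℝ => y ^ 2 * Real.exp (-b * y ^ 2)) := by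
  have := integrable_rpow_mul_exp_neg_mul_sq hb (s := (2:ℝ)) (by norm_num)
  refine this.congr (Filter.Eventually.of_forall fun x => ?_)
  show x ^ (2:ℝ) * Real.exp (-b * x ^ 2) = x ^ 2 * Real.exp (-b * x ^ 2)
  rw [show ((2:ℝ)) = ((2:ℕ):ℝ) by norm_num, Real.rpow_natCast]

lemma int_shift_aux {b m c : ℝ} (hb : 0 < b) (n : ℕ) (hn : n ≤ 2) :
    Integrable (fun x : ℝ => x ^ n * (c * Real.exp (-b * (x - m) ^ 2))) := by
  have hg : Integrable (fun y : ℝ => (y + m) ^ n * (c * Real.exp (-b * y ^ 2))) := by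
    have h0 : Integrable (fun y : ℝ => Real.exp (-b * y ^ 2)) := integrable_exp_neg_mul_sq hb
    have h1 : Integrable (fun y : ℝ => y * Real.exp (-b * y ^ 2)) := integrable_mul_exp_neg_mul_sq hb
    have h2 := int_sq_aux hb
    interval_cases n
    · refine (h0.const_mul c).congr (Filter.Eventually.of_forall fun x => ?_); ring
    · have := ((h1.const_mul c).add (h0.const_mul (m * c)))
      refine this.congr (Filter.Eventually.of_forall fun x => ?_)
      simp only [Pi.add_apply]; ring
    · have := ((h2.const_mul c).add (h1.const_mul (2 * m * c))).add (h0.const_mul (m ^ 2 * c))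
      refine this.congr (Filter.Eventually.of_forall fun x => ?_)
      simp only [Pi.add_apply]; ring
  have := hg.comp_sub_right m
  refine this.congr (Filter.Eventually.of_forall fun x => ?_)
  simp [sub_add_cancel]

lemma int_pow_pdf (m σ : ℝ) (hσ : 0 < σ) (n : ℕ) (hn : n ≤ 2) :
    Integrable (fun x : ℝ => x ^ n * stdNormalPdf ((x - m) / σ)) := by
  have hb : (0:ℝ) < (2 * σ ^ 2)⁻¹ := by positivity
  have := int_shift_aux (m := m) (c := (Real.sqrt (2 * Real.pi))⁻¹) hb n hn
  refine this.congr (Filter.Eventually.of_forall fun x => ?_)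
  simp only [pdf_comp m σ hσ]

lemma tendsto_sq_half : Tendsto (fun y : ℝ => -(y ^ 2 / 2)) atTop atBot := by
  apply tendsto_neg_atTop_atBot.comp
  exact (tendsto_pow_atTop two_ne_zero).atTop_div_const (by norm_num)

lemma tendsto_pdf : Tendsto stdNormalPdf atTop (𝓝 0) := by
  have h := Real.tendsto_exp_atBot.comp tendsto_sq_half
  have h2 := h.const_mul (Real.sqrt (2 * Real.pi))⁻¹
  rw [mul_zero] at h2
  refine h2.congr fun y => ?_
  simp [stdNormalPdf, neg_div, Function.comp]

lemma tendsto_mul_pdf : Tendsto (fun y : ℝ => y * stdNormalPdf y) atTop (𝓝 0) := by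
  have hlo := rpow_mul_exp_neg_mul_sq_isLittleO_exp_neg (by norm_num : (0:ℝ) < 1/2) 1
  simp_rw [Real.rpow_one] at hlo
  have hexp : Tendsto (fun x : ℝ => Real.exp (-(1/2) * x)) atTop (𝓝 0) := by
    apply Real.tendsto_exp_atBot.comp
    have : Tendsto (fun x : ℝ => -(x / 2)) atTop atBot :=
      tendsto_neg_atTop_atBot.comp (tendsto_id.atTop_div_const (by norm_num))
    exact this.congr fun x => by ring
  have key : Tendsto (fun x : ℝ => x * Real.exp (-(1/2) * x ^ 2)) atTop (𝓝 0) :=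
    hlo.isBigO.trans_tendsto hexp
  have h2 := key.const_mul (Real.sqrt (2 * Real.pi))⁻¹
  rw [mul_zero] at h2
  refine h2.congr fun y => ?_
  simp only [stdNormalPdf]
  ring_nf

section FTC
variable {m σ : ℝ}

lemma inner_deriv (x : ℝ) : HasDerivAt (fun x : ℝ => (x - m) / σ) σ⁻¹ x := by
  simpa using ((hasDerivAt_id x).sub_const m).div_const σ

lemma inner_tendsto (hσ : 0 < σ) : Tendsto (fun x : ℝ => (x - m) / σ) atTop atTop := by
  apply Tendsto.atTop_div_const hσ
  simpa [sub_eq_add_neg] using tendsto_atTop_add_const_right atTop (-m) tendsto_id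

lemma ftc1 (hσ : 0 < σ) : ∫ x in Ioi (0:ℝ), x * stdNormalPdf ((x - m) / σ) * σ⁻¹
    = m * stdNormalPhi (m / σ) + σ * stdNormalPdf (m / σ) := by
  have hσ' : σ ≠ 0 := hσ.ne'
  set F : ℝ → ℝ := fun x => m * stdNormalPhi ((x - m) / σ) - σ * stdNormalPdf ((x - m) / σ) with hF
  have hderiv : ∀ x ∈ Ici (0:ℝ), HasDerivAt F (x * stdNormalPdf ((x - m) / σ) * σ⁻¹) x := by
    intro x _
    have hΦ := ((hasDerivAt_Phi ((x - m) / σ)).comp x (inner_deriv x)).const_mul m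
    have hq := ((hasDerivAt_pdf ((x - m) / σ)).comp x (inner_deriv x)).const_mul σ
    have := hΦ.sub hq
    refine this.congr_deriv ?_
    field_simp
    ring
  have hint : IntegrableOn (fun x => x * stdNormalPdf ((x - m) / σ) * σ⁻¹) (Ioi 0) := by
    have := (int_pow_pdf m σ hσ 1 one_le_two).mul_const σ⁻¹
    refine (this.congr (Filter.Eventually.of_forall fun x => by simp)).integrableOn
  have htend : Tendsto F atTop (𝓝 m) := by
    have h1 := Phi_tendsto.comp (inner_tendsto (m := m) hσ)
    have h2 := tendsto_pdf.comp (inner_tendsto (m := m) hσ)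
    have := ((h1.const_mul m).sub (h2.const_mul σ))
    simpa using this
  rw [MeasureTheory.integral_Ioi_of_hasDerivAt_of_tendsto' (fun x hx => hderiv x hx) hint htend]
  have h0 : (0 - m) / σ = -(m / σ) := by ring
  rw [hF]
  simp only [h0, Phi_neg, pdf_even]
  ring

lemma ftc2 (hσ : 0 < σ) : ∫ x in Ioi (0:ℝ), x ^ 2 * stdNormalPdf ((x - m) / σ) * σ⁻¹
    = (m ^ 2 + σ ^ 2) * stdNormalPhi (m / σ) + m * σ * stdNormalPdf (m / σ) := by
  have hσ' : σ ≠ 0 := hσ.ne'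
  set G : ℝ → ℝ := fun x => (m ^ 2 + σ ^ 2) * stdNormalPhi ((x - m) / σ)
    - σ * ((x + m) * stdNormalPdf ((x - m) / σ)) with hG
  have hderiv : ∀ x ∈ Ici (0:ℝ), HasDerivAt G (x ^ 2 * stdNormalPdf ((x - m) / σ) * σ⁻¹) x := by
    intro x _
    have hΦ := ((hasDerivAt_Phi ((x - m) / σ)).comp x (inner_deriv x)).const_mul (m ^ 2 + σ ^ 2)
    have hq := (hasDerivAt_pdf ((x - m) / σ)).comp x (inner_deriv x)
    have hprod := (((hasDerivAt_id x).add_const m).mul hq).const_mul σ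
    have := hΦ.sub hprod
    refine this.congr_deriv ?_
    simp only [Function.comp_apply, id]
    field_simp
    ring
  have hint : IntegrableOn (fun x => x ^ 2 * stdNormalPdf ((x - m) / σ) * σ⁻¹) (Ioi 0) := by
    have := (int_pow_pdf m σ hσ 2 le_rfl).mul_const σ⁻¹
    refine (this.congr (Filter.Eventually.of_forall fun x => by simp)).integrableOn
  have htend : Tendsto G atTop (𝓝 (m ^ 2 + σ ^ 2)) := by
    have h1 := Phi_tendsto.comp (inner_tendsto (m := m) hσ)
    have h2 := tendsto_pdf.comp (inner_tendsto (m := m) hσ)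
    have h3 := tendsto_mul_pdf.comp (inner_tendsto (m := m) hσ)
    have hxm : Tendsto (fun x : ℝ => (x + m) * stdNormalPdf ((x - m) / σ)) atTop (𝓝 0) := by
      have := (h3.const_mul σ).add (h2.const_mul (2 * m))
      rw [mul_zero, mul_zero, add_zero] at this
      refine this.congr fun x => ?_
      simp only [Function.comp_apply]
      field_simp
      ring
    have := (h1.const_mul (m ^ 2 + σ ^ 2)).sub (hxm.const_mul σ)
    simpa using this
  rw [MeasureTheory.integral_Ioi_of_hasDerivAt_of_tendsto' (fun x hx => hderiv x hx) hint htend]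
  have h0 : (0 - m) / σ = -(m / σ) := by ring
  rw [hG]
  simp only [h0, Phi_neg, pdf_even, zero_add]
  ring

end FTC

theorem stmt_12 (m : ℝ) (σ : ℝ) (hσ : 0 < σ) :
    variance (fun x => max x 0) (gaussianReal m (⟨σ ^ 2, sq_nonneg σ⟩ : NNReal))
      = (m ^ 2 + σ ^ 2) * stdNormalPhi (m / σ) + m * σ * stdNormalPdf (m / σ)
        - (m * stdNormalPhi (m / σ) + σ * stdNormalPdf (m / σ)) ^ 2 := by
  set v : NNReal := (⟨σ ^ 2, sq_nonneg σ⟩ : NNReal) with hv_def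
  have hσ' : σ ≠ 0 := hσ.ne'
  have hv : v ≠ 0 := by
    intro h
    have : σ ^ 2 = 0 := congrArg NNReal.toReal h
    exact hσ' (by simpa [pow_eq_zero_iff] using this)
  set μ : Measure ℝ := gaussianReal m v with hμ_def
  have hPnonneg : ∀ x, 0 ≤ gaussianPDFReal m v x := fun x => gaussianPDFReal_nonneg m v x
  -- integral conversion
  have key : ∀ g : ℝ → ℝ, ∫ x, g x ∂μ = ∫ x, gaussianPDFReal m v x * g x := by
    intro g
    rw [hμ_def, gaussianReal_of_var_ne_zero m hv]
    have hd : gaussianPDF m v = fun x => ((gaussianPDFReal m v x).toNNReal : ENNReal) := by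
      funext x; simp [gaussianPDF, ENNReal.ofReal]
    rw [hd, integral_withDensity_eq_integral_smul (measurable_gaussianPDFReal m v).real_toNNReal g]
    congr 1
    funext x
    simp [NNReal.smul_def, Real.coe_toNNReal _ (hPnonneg x)]
  -- integrability of squared max
  have hint_sq : Integrable (fun x : ℝ => x ^ 2 * (stdNormalPdf ((x - m) / σ) * σ⁻¹)) := by
    have := (int_pow_pdf m σ hσ 2 le_rfl).mul_const σ⁻¹
    exact this.congr (Filter.Eventually.of_forall fun x => by ring)
  have hint_max : Integrable (fun x : ℝ => max x 0 ^ 2 * gaussianPDFReal m v x) := by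
    refine hint_sq.mono ?_ (Filter.Eventually.of_forall fun x => ?_)
    · have hc : Continuous (fun x : ℝ => max x 0 ^ 2 * gaussianPDFReal m v x) := by
        have : Continuous (gaussianPDFReal m v) := by unfold gaussianPDFReal; fun_prop
        exact ((continuous_id.max continuous_const).pow 2).mul this
      exact hc.aestronglyMeasurable
    · rw [pdf_eq m σ hσ x]
      have hq0 := pdf_nonneg ((x - m) / σ)
      have hp : 0 ≤ stdNormalPdf ((x - m) / σ) * σ⁻¹ := by positivity
      have hmx : max x 0 ^ 2 ≤ x ^ 2 := by
        rcases le_or_gt x 0 with h | h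
        · simp [max_eq_right h, sq_nonneg]
        · rw [max_eq_left h.le]
      rw [Real.norm_eq_abs, Real.norm_eq_abs,
        abs_of_nonneg (by positivity : (0:ℝ) ≤ x ^ 2 * (stdNormalPdf ((x - m) / σ) * σ⁻¹)),
        abs_mul, abs_of_nonneg hp, abs_of_nonneg (sq_nonneg _)]
      exact mul_le_mul_of_nonneg_right hmx hp
  have hmem : MemLp (fun x : ℝ => max x 0) 2 μ := by
    have hmeas : AEStronglyMeasurable (fun x : ℝ => max x 0) μ :=
      (by fun_prop : Continuous (fun x : ℝ => max x 0)).aestronglyMeasurable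
    rw [memLp_two_iff_integrable_sq hmeas]
    rw [hμ_def, gaussianReal_of_var_ne_zero m hv]
    rw [integrable_withDensity_iff (measurable_gaussianPDF m v)
      (Filter.Eventually.of_forall fun x => ENNReal.ofReal_lt_top)]
    refine hint_max.congr (Filter.Eventually.of_forall fun x => ?_)
    simp [gaussianPDF, ENNReal.toReal_ofReal (hPnonneg x)]
  have hprob : IsProbabilityMeasure μ := by rw [hμ_def]; infer_instance
  rw [variance_eq_sub hmem]
  -- compute the two integrals
  have e1 : ∫ x, max x 0 ∂μ = m * stdNormalPhi (m / σ) + σ * stdNormalPdf (m / σ) := by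
    rw [key]
    have : (fun x => gaussianPDFReal m v x * max x 0)
        = Set.indicator (Ioi (0:ℝ)) (fun x => x * stdNormalPdf ((x - m) / σ) * σ⁻¹) := by
      funext x
      rw [pdf_eq m σ hσ x]
      rcases le_or_gt x 0 with h | h
      · simp [Set.indicator_of_notMem (by simpa using h : x ∉ Ioi (0:ℝ)), max_eq_right h]
      · rw [Set.indicator_of_mem (by simpa using h), max_eq_left h.le]; ring
    rw [this, integral_indicator measurableSet_Ioi, ftc1 hσ]
  have e2 : ∫ x, max x 0 ^ 2 ∂μ
      = (m ^ 2 + σ ^ 2) * stdNormalPhi (m / σ) + m * σ * stdNormalPdf (m / σ) := by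
    rw [key]
    have : (fun x => gaussianPDFReal m v x * max x 0 ^ 2)
        = Set.indicator (Ioi (0:ℝ)) (fun x => x ^ 2 * stdNormalPdf ((x - m) / σ) * σ⁻¹) := by
      funext x
      rw [pdf_eq m σ hσ x]
      rcases le_or_gt x 0 with h | h
      · simp [Set.indicator_of_notMem (by simpa using h : x ∉ Ioi (0:ℝ)), max_eq_right h]
      · rw [Set.indicator_of_mem (by simpa using h), max_eq_left h.le]; ring
    rw [this, integral_indicator measurableSet_Ioi, ftc2 hσ]
  have hpow : (fun x : ℝ => max x 0) ^ 2 = fun x : ℝ => max x 0 ^ 2 := by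
    funext x; simp [pow_two]
  rw [hpow]
  rw [e1, e2]
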